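/- Correctness of the translation-based model checking algorithm: Let L be a finite distributive lattice and M an mv-CGS over L. Then for every state formula φ of mv-ATL* and every state q: [[φ]]_{M,q} = ⨆ { ℓ ∈ L | ℓ is join-irreducible and [[φ]]_{f_ℓ(M),q} = ⊤ }, where f_ℓ(M) is the reduction of M via the threshold function f_ℓ to the two-element lattice {⊥,⊤}. -/

import Mathlib

/-- A concurrent game structure (CGS): availability function `d` (with every
`d a q` nonempty) and a deterministic transition function `t`. -/
structure CGS (Agt St Act : Type*) where
  d : Agt → St → Set Act
  d_nonempty : ∀ a q, (d a q).Nonempty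
  t : St → (Agt → Act) → St

namespace CGS

variable {Agt St Act : Type*}

/-- An action profile `α` is available at state `q`. -/
def Avail (G : CGS Agt St Act) (q : St) (α : Agt → Act) : Prop :=
  ∀ a, α a ∈ G.d a q

/-- `lam` is a path of `G`: each step is realized by some available profile. -/
def IsPath (G : CGS Agt St Act) (lam : ℕ → St) : Prop :=
  ∀ i, ∃ α, G.Avail (lam i) α ∧ G.t (lam i) α = lam (i + 1)

/-- A perfect-recall strategy for agent `a`: a choice of an available action
for every nonempty finite history, represented as (proper prefix, last state). -/
structure PRStrategy (G : CGS Agt St Act) (a : Agt) where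
  act : List St → St → Act
  avail : ∀ h q, act h q ∈ G.d a q

/-- A collective perfect-recall strategy for the coalition `A`. -/
def PRColl (G : CGS Agt St Act) (A : Set Agt) := (a : A) → PRStrategy G (a : Agt)

/-- The outcome set of a collective perfect-recall strategy `s` from state `q`:
all paths starting at `q` consistent with `s`. -/
def prOut (G : CGS Agt St Act) {A : Set Agt} (q : St) (s : PRColl G A) : Set (ℕ → St) :=
  { lam | lam 0 = q ∧ ∀ i, ∃ α, G.Avail (lam i) α ∧ G.t (lam i) α = lam (i + 1) ∧
      ∀ a : A, α (a : Agt) = (s a).act (List.ofFn fun j : Fin i => lam j) (lam i) }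

end CGS

mutual
/-- State formulas of mv-ATL*. -/
inductive SForm (AP C Agt : Type) : Type
  | const : C → SForm AP C Agt
  | atom  : AP → SForm AP C Agt
  | and   : SForm AP C Agt → SForm AP C Agt → SForm AP C Agt
  | or    : SForm AP C Agt → SForm AP C Agt → SForm AP C Agt
  | coop  : Set Agt → PForm AP C Agt → SForm AP C Agt
  | nec   : Set Agt → PForm AP C Agt → SForm AP C Agt
/-- Path formulas of mv-ATL*. -/
inductive PForm (AP C Agt : Type) : Type
  | state : SForm AP C Agt → PForm AP C Agt
  | and   : PForm AP C Agt → PForm AP C Agt → PForm AP C Agt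
  | or    : PForm AP C Agt → PForm AP C Agt → PForm AP C Agt
  | next  : PForm AP C Agt → PForm AP C Agt
  | untl  : PForm AP C Agt → PForm AP C Agt → PForm AP C Agt
  | wuntl : PForm AP C Agt → PForm AP C Agt → PForm AP C Agt
end

variable {Agt St Act AP C : Type} {L : Type*} [CompleteLattice L]

mutual
/-- Multi-valued truth value of a state formula at a state. -/
noncomputable def sval (G : CGS Agt St Act) (σ : C → L) (V : AP → St → L) :
    SForm AP C Agt → St → L
  | .const c, _ => σ c
  | .atom p, q => V p q
  | .and φ ψ, q => sval G σ V φ q ⊓ sval G σ V ψ q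
  | .or φ ψ, q => sval G σ V φ q ⊔ sval G σ V ψ q
  | .coop A γ, q => ⨆ s : CGS.PRColl G A, ⨅ lam ∈ CGS.prOut G q s, pval G σ V γ lam
  | .nec A γ, q => ⨅ s : CGS.PRColl G A, ⨆ lam ∈ CGS.prOut G q s, pval G σ V γ lam

/-- Multi-valued truth value of a path formula on a path. -/
noncomputable def pval (G : CGS Agt St Act) (σ : C → L) (V : AP → St → L) :
    PForm AP C Agt → (ℕ → St) → L
  | .state φ, lam => sval G σ V φ (lam 0)
  | .and γ δ, lam => pval G σ V γ lam ⊓ pval G σ V δ lam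
  | .or γ δ, lam => pval G σ V γ lam ⊔ pval G σ V δ lam
  | .next γ, lam => pval G σ V γ (fun k => lam (k + 1))
  | .untl γ δ, lam =>
      ⨆ i : ℕ, (pval G σ V δ (fun k => lam (k + i)) ⊓
        ⨅ j : Fin i, pval G σ V γ (fun k => lam (k + (j : ℕ))))
  | .wuntl γ δ, lam =>
      (⨅ i : ℕ, pval G σ V γ (fun k => lam (k + i))) ⊔
      ⨆ i : ℕ, (pval G σ V δ (fun k => lam (k + i)) ⊓
        ⨅ j : Fin i, pval G σ V γ (fun k => lam (k + (j : ℕ))))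
end

/-- A join-irreducible element of a lattice with bottom. -/
def JoinIrred {L : Type*} [Lattice L] [OrderBot L] (ℓ : L) : Prop :=
  ℓ ≠ ⊥ ∧ ∀ x y : L, ℓ = x ⊔ y → ℓ = x ∨ ℓ = y


section Helpers

variable {L : Type*} [CompleteLattice L]

lemma prime_sup (hd : ∀ x y z : L, x ⊓ (y ⊔ z) = (x ⊓ y) ⊔ (x ⊓ z))
    {ℓ : L} (h : JoinIrred ℓ) {x y : L} : ℓ ≤ x ⊔ y ↔ ℓ ≤ x ∨ ℓ ≤ y := by
  constructor
  · intro hle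
    have h1 : ℓ = (ℓ ⊓ x) ⊔ (ℓ ⊓ y) := by rw [← hd]; exact (inf_eq_left.mpr hle).symm
    rcases h.2 _ _ h1 with h2 | h2
    · exact Or.inl ((le_of_eq h2).trans inf_le_right)
    · exact Or.inr ((le_of_eq h2).trans inf_le_right)
  · rintro (h | h)
    · exact h.trans le_sup_left
    · exact h.trans le_sup_right

lemma prime_finsetSup (hd : ∀ x y z : L, x ⊓ (y ⊔ z) = (x ⊓ y) ⊔ (x ⊓ z))
    {ℓ : L} (h : JoinIrred ℓ) {ι : Type*} (t : Finset ι) (f : ι → L) :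
    ℓ ≤ t.sup f ↔ ∃ i ∈ t, ℓ ≤ f i := by
  classical
  induction t using Finset.induction with
  | empty => simp [le_bot_iff, h.1]
  | insert _ _ hx ih => simp [Finset.sup_insert, prime_sup hd h, ih]

lemma prime_sSup [Fintype L] (hd : ∀ x y z : L, x ⊓ (y ⊔ z) = (x ⊓ y) ⊔ (x ⊓ z))
    {ℓ : L} (h : JoinIrred ℓ) (S : Set L) :
    ℓ ≤ sSup S ↔ ∃ x ∈ S, ℓ ≤ x := by
  have hfin : S.Finite := Set.toFinite S
  have h1 : sSup S = hfin.toFinset.sup id := by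
    rw [Finset.sup_id_eq_sSup]; congr 1; simp
  rw [h1, prime_finsetSup hd h]
  simp

lemma prime_iSup [Fintype L] (hd : ∀ x y z : L, x ⊓ (y ⊔ z) = (x ⊓ y) ⊔ (x ⊓ z))
    {ℓ : L} (h : JoinIrred ℓ) {ι : Sort*} (f : ι → L) :
    ℓ ≤ ⨆ i, f i ↔ ∃ i, ℓ ≤ f i := by
  rw [iSup, prime_sSup hd h]
  constructor
  · rintro ⟨x, ⟨i, rfl⟩, hx⟩; exact ⟨i, hx⟩
  · rintro ⟨i, hi⟩; exact ⟨f i, ⟨i, rfl⟩, hi⟩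

lemma le_sSup_joinIrred [Fintype L] (v : L) :
    v ≤ sSup {ℓ : L | JoinIrred ℓ ∧ ℓ ≤ v} := by
  induction v using WellFoundedLT.induction with
  | _ v ih =>
    by_cases hb : v = ⊥
    · simp [hb]
    by_cases hj : JoinIrred v
    · exact le_sSup ⟨hj, le_rfl⟩
    · simp only [JoinIrred, not_and, not_forall] at hj
      obtain ⟨x, y, hxy, hne⟩ := hj hb
      push_neg at hne
      have hxv : x ≤ v := hxy ▸ le_sup_left
      have hyv : y ≤ v := hxy ▸ le_sup_right
      have hx : x < v := lt_of_le_of_ne hxv (fun h => hne.1 h.symm)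
      have hy : y < v := lt_of_le_of_ne hyv (fun h => hne.2 h.symm)
      have mx : sSup {ℓ : L | JoinIrred ℓ ∧ ℓ ≤ x} ≤ sSup {ℓ : L | JoinIrred ℓ ∧ ℓ ≤ v} :=
        sSup_le_sSup fun ℓ hℓ => ⟨hℓ.1, hℓ.2.trans hxv⟩
      have my : sSup {ℓ : L | JoinIrred ℓ ∧ ℓ ≤ y} ≤ sSup {ℓ : L | JoinIrred ℓ ∧ ℓ ≤ v} :=
        sSup_le_sSup fun ℓ hℓ => ⟨hℓ.1, hℓ.2.trans hyv⟩
      calc v = x ⊔ y := hxy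
        _ ≤ _ := sup_le ((ih x hx).trans mx) ((ih y hy).trans my)

lemma eq_sSup_joinIrred [Fintype L] (v : L) :
    v = sSup {ℓ : L | JoinIrred ℓ ∧ ℓ ≤ v} :=
  le_antisymm (le_sSup_joinIrred v) (sSup_le fun _ h => h.2)

end Helpers

section Reduce

variable {L : Type*} [CompleteLattice L] [Fintype L]
variable {Agt St Act AP C : Type}

mutual
theorem red_s (hd : ∀ x y z : L, x ⊓ (y ⊔ z) = (x ⊓ y) ⊔ (x ⊓ z))
    {ℓ : L} (hℓ : JoinIrred ℓ)
    (G : CGS Agt St Act) (σ : C → L) (V : AP → St → L) :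
    ∀ (φ : SForm AP C Agt) (q : St),
      sval G (fun c => (ℓ ≤ σ c : Prop)) (fun p q' => (ℓ ≤ V p q' : Prop)) φ q ↔
        ℓ ≤ sval G σ V φ q
  | .const c, q => by simp [sval]
  | .atom p, q => by simp [sval]
  | .and φ ψ, q => by
      rw [sval, sval, le_inf_iff]
      exact and_congr (red_s hd hℓ G σ V φ q) (red_s hd hℓ G σ V ψ q)
  | .or φ ψ, q => by
      rw [sval, sval, prime_sup hd hℓ]
      exact or_congr (red_s hd hℓ G σ V φ q) (red_s hd hℓ G σ V ψ q)
  | .coop A γ, q => by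
      rw [sval, sval, prime_iSup hd hℓ]
      simp only [iSup_Prop_eq, iInf_Prop_eq, le_iInf_iff]
      exact exists_congr fun s => forall_congr' fun lam => forall_congr' fun _ =>
        red_p hd hℓ G σ V γ lam
  | .nec A γ, q => by
      rw [sval, sval, le_iInf_iff]
      simp only [iSup_Prop_eq, iInf_Prop_eq]
      refine forall_congr' fun s => ?_
      rw [prime_iSup hd hℓ]
      refine exists_congr fun lam => ?_
      rw [prime_iSup hd hℓ]
      exact exists_congr fun _ => red_p hd hℓ G σ V γ lam

theorem red_p (hd : ∀ x y z : L, x ⊓ (y ⊔ z) = (x ⊓ y) ⊔ (x ⊓ z))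
    {ℓ : L} (hℓ : JoinIrred ℓ)
    (G : CGS Agt St Act) (σ : C → L) (V : AP → St → L) :
    ∀ (γ : PForm AP C Agt) (lam : ℕ → St),
      pval G (fun c => (ℓ ≤ σ c : Prop)) (fun p q' => (ℓ ≤ V p q' : Prop)) γ lam ↔
        ℓ ≤ pval G σ V γ lam
  | .state φ, lam => by
      rw [pval, pval]; exact red_s hd hℓ G σ V φ (lam 0)
  | .and γ δ, lam => by
      rw [pval, pval, le_inf_iff]
      exact and_congr (red_p hd hℓ G σ V γ lam) (red_p hd hℓ G σ V δ lam)
  | .or γ δ, lam => by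
      rw [pval, pval, prime_sup hd hℓ]
      exact or_congr (red_p hd hℓ G σ V γ lam) (red_p hd hℓ G σ V δ lam)
  | .next γ, lam => by
      rw [pval, pval]; exact red_p hd hℓ G σ V γ _
  | .untl γ δ, lam => by
      rw [pval, pval, prime_iSup hd hℓ]
      simp only [iSup_Prop_eq, iInf_Prop_eq, le_inf_iff, le_iInf_iff]
      exact exists_congr fun i => and_congr (red_p hd hℓ G σ V δ _)
        (forall_congr' fun j => red_p hd hℓ G σ V γ _)
  | .wuntl γ δ, lam => by
      rw [pval, pval, prime_sup hd hℓ, prime_iSup hd hℓ, le_iInf_iff]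
      simp only [iSup_Prop_eq, iInf_Prop_eq, le_inf_iff, le_iInf_iff]
      exact or_congr (forall_congr' fun i => red_p hd hℓ G σ V γ _)
        (exists_congr fun i => and_congr (red_p hd hℓ G σ V δ _)
          (forall_congr' fun j => red_p hd hℓ G σ V γ _))
end

end Reduce

/-- Correctness of the translation-based model checking algorithm: the value of
a state formula is the join of those join-irreducible `ℓ` for which the
formula holds in the two-valued threshold reduction `f_ℓ(M)` (the two-element
lattice realized as `Prop`, `f_ℓ x = (ℓ ≤ x)`). -/
theorem stmt_14 {L : Type*} [CompleteLattice L] [Fintype L]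
    (hdistrib : ∀ x y z : L, x ⊓ (y ⊔ z) = (x ⊓ y) ⊔ (x ⊓ z))
    {Agt St Act AP C : Type} [Fintype Agt] [Fintype St] [Fintype Act]
    [Nonempty Agt] [Nonempty St] [Nonempty Act]
    (G : CGS Agt St Act) (σ : C → L) (V : AP → St → L)
    (φ : SForm AP C Agt) (q : St) :
    sval G σ V φ q =
      sSup {ℓ : L | JoinIrred ℓ ∧
        sval G (fun c => (ℓ ≤ σ c : Prop)) (fun p q' => (ℓ ≤ V p q' : Prop)) φ q = (⊤ : Prop)} := by
  have hset : {ℓ : L | JoinIrred ℓ ∧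
      sval G (fun c => (ℓ ≤ σ c : Prop)) (fun p q' => (ℓ ≤ V p q' : Prop)) φ q = (⊤ : Prop)} =
      {ℓ : L | JoinIrred ℓ ∧ ℓ ≤ sval G σ V φ q} := by
    ext ℓ
    simp only [Set.mem_setOf_eq, and_congr_right_iff]
    intro hℓ
    rw [eq_iff_iff]
    constructor
    · intro h
      exact (red_s hdistrib hℓ G σ V φ q).mp (h.mpr trivial)
    · intro h
      exact iff_of_true ((red_s hdistrib hℓ G σ V φ q).mpr h) trivial
  rw [hset]
  exact eq_sSup_joinIrred _
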